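/- (Convexity of nonsmooth deviatoric representation vs. convexity of the deviatoric section.) Let g : [0, π/3] → ℝ be continuous, strictly positive, twice differentiable on (0, π/3), and possess one-sided derivatives g′₊(0) at 0 and g′₋(π/3) at π/3. Then G = q/g(θ) is a convex function of (S₁,S₂) on ℝ² if and only if: g(θ)² + 2g′(θ)² − g(θ)g″(θ) ≥ 0 for all θ ∈ (0, π/3), g′₊(0) ≤ 0, and g′₋(π/3) ≥ 0. -/

import Mathlib

/-- The deviatoric stress invariant q(S₁,S₂) = √(3(S₁² + S₁S₂ + S₂²)), with S₃ = −S₁−S₂. -/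
noncomputable def qf (S : ℝ × ℝ) : ℝ :=
  Real.sqrt (3 * (S.1 ^ 2 + S.1 * S.2 + S.2 ^ 2))

/-- The Lode angle θ(S₁,S₂) = (1/3)·arccos((27/2)·S₁S₂S₃/q³) ∈ [0, π/3], S₃ = −S₁−S₂. -/
noncomputable def θf (S : ℝ × ℝ) : ℝ :=
  (1 / 3) * Real.arccos ((27 / 2) * (S.1 * S.2 * (-S.1 - S.2)) / (qf S) ^ 3)

/-- The deviatoric yield function G(S₁,S₂) = q(S₁,S₂)/g(θ(S₁,S₂)) (equal to 0 at the
origin, where q = 0). -/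
noncomputable def Gf (g : ℝ → ℝ) (S : ℝ × ℝ) : ℝ :=
  qf S / g (θf S)



open Real Set

/-- folding of the angle into `[0, π/3]` -/
noncomputable def fold (ψ : ℝ) : ℝ := (1 / 3) * Real.arccos (Real.cos (3 * ψ))

/-- the point with "radius" r and angle ψ -/
noncomputable def ptv (r ψ : ℝ) : ℝ × ℝ :=
  (r * (2 / 3 * Real.cos ψ), r * (2 / 3 * Real.cos (ψ - 2 * Real.pi / 3)))

/-- direction vector of the tangent line at angle ψ -/
noncomputable def dirv (ψ : ℝ) : ℝ × ℝ :=
  (-(2 / 3) * Real.sin ψ, -(2 / 3) * Real.sin (ψ - 2 * Real.pi / 3))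

/-- the restriction of `Gf` to a tangent line -/
noncomputable def cfun (g : ℝ → ℝ) (ψ0 t : ℝ) : ℝ :=
  Real.sqrt (1 + t ^ 2) / g (fold (ψ0 + Real.arctan t))

lemma fold_mem (ψ : ℝ) : fold ψ ∈ Icc 0 (π / 3) := by
  constructor
  · exact mul_nonneg (by norm_num) (Real.arccos_nonneg _)
  · rw [fold]
    nlinarith [Real.arccos_le_pi (Real.cos (3 * ψ))]

lemma fold_eq_self {ψ : ℝ} (h0 : 0 ≤ ψ) (h1 : ψ ≤ π / 3) : fold ψ = ψ := by
  rw [fold, Real.arccos_cos (by linarith) (by linarith)]; ring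

lemma fold_neg (ψ : ℝ) : fold (-ψ) = fold ψ := by
  rw [fold, fold, mul_neg, Real.cos_neg]

lemma fold_add_pi3 (ψ : ℝ) : fold (ψ + π / 3) = π / 3 - fold ψ := by
  have : (3 : ℝ) * (ψ + π / 3) = 3 * ψ + π := by ring
  rw [fold, this, Real.cos_add_pi, Real.arccos_neg, fold]; ring

lemma fold_period (ψ : ℝ) : fold (ψ + 2 * π / 3) = fold ψ := by
  have h1 : ψ + 2 * π / 3 = (ψ + π / 3) + π / 3 := by ring
  rw [h1, fold_add_pi3, fold_add_pi3]; ring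

lemma fold_sub_period (ψ : ℝ) : fold (ψ - 2 * π / 3) = fold ψ := by
  have := fold_period (ψ - 2 * π / 3); rw [← this]; ring_nf

lemma fold_continuous : Continuous fold := by
  unfold fold
  exact continuous_const.mul (Real.continuous_arccos.comp (Real.continuous_cos.comp
    (continuous_const.mul continuous_id)))

lemma cos_prod_ident (ψ : ℝ) :
    Real.cos ψ * Real.cos (ψ - 2 * π / 3) * Real.cos (ψ + 2 * π / 3)
      = (1 / 4) * Real.cos (3 * ψ) := by
  have h1 : Real.cos (ψ - 2 * π / 3)
      = Real.cos ψ * Real.cos (2 * π / 3) + Real.sin ψ * Real.sin (2 * π / 3) := by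
    rw [Real.cos_sub]
  have h2 : Real.cos (ψ + 2 * π / 3)
      = Real.cos ψ * Real.cos (2 * π / 3) - Real.sin ψ * Real.sin (2 * π / 3) := by
    rw [Real.cos_add]
  have hc : Real.cos (2 * π / 3) = -(1 / 2) := by
    have : (2 : ℝ) * π / 3 = π - π / 3 := by ring
    rw [this, Real.cos_pi_sub, Real.cos_pi_div_three]
  have hs : Real.sin (2 * π / 3) = Real.sqrt 3 / 2 := by
    have : (2 : ℝ) * π / 3 = π - π / 3 := by ring
    rw [this, Real.sin_pi_sub, Real.sin_pi_div_three]
  have h3 : Real.sqrt 3 ^ 2 = 3 := Real.sq_sqrt (by norm_num)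
  have hpy : Real.sin ψ ^ 2 = 1 - Real.cos ψ ^ 2 := by
    have := Real.sin_sq_add_cos_sq ψ; linarith
  rw [h1, h2, hc, hs, Real.cos_three_mul]
  linear_combination (-(Real.cos ψ) * Real.sin ψ ^ 2 / 4) * h3 + (-(3 / 4) * Real.cos ψ) * hpy

lemma cos_sub_expand (ψ : ℝ) :
    Real.cos (ψ - 2 * π / 3) = -(1 / 2) * Real.cos ψ + (Real.sqrt 3 / 2) * Real.sin ψ := by
  have hc : Real.cos (2 * π / 3) = -(1 / 2) := by
    have : (2 : ℝ) * π / 3 = π - π / 3 := by ring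
    rw [this, Real.cos_pi_sub, Real.cos_pi_div_three]
  have hs : Real.sin (2 * π / 3) = Real.sqrt 3 / 2 := by
    have : (2 : ℝ) * π / 3 = π - π / 3 := by ring
    rw [this, Real.sin_pi_sub, Real.sin_pi_div_three]
  rw [Real.cos_sub, hc, hs]; ring

lemma qf_ptv {r : ℝ} (hr : 0 ≤ r) (ψ : ℝ) : qf (ptv r ψ) = r := by
  have h3 : Real.sqrt 3 ^ 2 = 3 := Real.sq_sqrt (by norm_num)
  have hpy : Real.sin ψ ^ 2 = 1 - Real.cos ψ ^ 2 := by
    have := Real.sin_sq_add_cos_sq ψ; linarith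
  have key : 3 * ((ptv r ψ).1 ^ 2 + (ptv r ψ).1 * (ptv r ψ).2 + (ptv r ψ).2 ^ 2) = r ^ 2 := by
    simp only [ptv, cos_sub_expand]
    linear_combination (r ^ 2 * Real.sin ψ ^ 2 / 3) * h3 + r ^ 2 * hpy
  rw [qf, key, Real.sqrt_sq hr]

lemma qf_nonneg (S : ℝ × ℝ) : 0 ≤ qf S := Real.sqrt_nonneg _

lemma θf_ptv {r : ℝ} (hr : 0 < r) (ψ : ℝ) : θf (ptv r ψ) = fold ψ := by
  have hq : qf (ptv r ψ) = r := qf_ptv hr.le ψ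
  have hS3 : -(ptv r ψ).1 - (ptv r ψ).2 = r * (2 / 3 * Real.cos (ψ + 2 * π / 3)) := by
    simp only [ptv]
    have h2 : Real.cos (ψ + 2 * π / 3)
        = Real.cos ψ * Real.cos (2 * π / 3) - Real.sin ψ * Real.sin (2 * π / 3) := by
      rw [Real.cos_add]
    have h1 := cos_sub_expand ψ
    have hc : Real.cos (2 * π / 3) = -(1 / 2) := by
      have : (2 : ℝ) * π / 3 = π - π / 3 := by ring
      rw [this, Real.cos_pi_sub, Real.cos_pi_div_three]
    have hs : Real.sin (2 * π / 3) = Real.sqrt 3 / 2 := by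
      have : (2 : ℝ) * π / 3 = π - π / 3 := by ring
      rw [this, Real.sin_pi_sub, Real.sin_pi_div_three]
    rw [h2, hc, hs, h1]; ring
  have harg : (27 / 2) * ((ptv r ψ).1 * (ptv r ψ).2 * (-(ptv r ψ).1 - (ptv r ψ).2))
      / (qf (ptv r ψ)) ^ 3 = Real.cos (3 * ψ) := by
    rw [hq, hS3]
    have hprod := cos_prod_ident ψ
    simp only [ptv]
    set a := Real.cos ψ with ha
    set b := Real.cos (ψ - 2 * π / 3) with hb
    set d := Real.cos (ψ + 2 * π / 3) with hd
    set e := Real.cos (3 * ψ) with he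
    rw [div_eq_iff (pow_ne_zero _ hr.ne')]
    linear_combination (4 * r ^ 3) * hprod
  rw [θf, harg, fold]

lemma Gf_ptv (g : ℝ → ℝ) {r : ℝ} (hr : 0 ≤ r) (ψ : ℝ) :
    Gf g (ptv r ψ) = r / g (fold ψ) := by
  rcases lt_or_eq_of_le hr with h | h
  · rw [Gf, qf_ptv hr ψ, θf_ptv h ψ]
  · subst h
    have h0 : ptv 0 ψ = (0, 0) := by simp [ptv]
    rw [Gf, h0]
    have : qf (0, 0) = 0 := by simp [qf]
    rw [this]; simp

lemma sqrt_one_add_sq_pos (t : ℝ) : 0 < Real.sqrt (1 + t ^ 2) :=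
  Real.sqrt_pos.2 (by positivity)

lemma ptv_line (d ψ0 t : ℝ) :
    ptv (d * Real.sqrt (1 + t ^ 2)) (ψ0 + Real.arctan t)
      = ptv d ψ0 + t • (d • dirv ψ0) := by
  have hs := sqrt_one_add_sq_pos t
  have hca : Real.cos (Real.arctan t) = 1 / Real.sqrt (1 + t ^ 2) := Real.cos_arctan t
  have hsa : Real.sin (Real.arctan t) = t / Real.sqrt (1 + t ^ 2) := Real.sin_arctan t
  have key : ∀ ψ : ℝ, d * Real.sqrt (1 + t ^ 2) * (2 / 3 * Real.cos (ψ + Real.arctan t))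
      = d * (2 / 3 * Real.cos ψ) + t * (d * (-(2 / 3) * Real.sin ψ)) := by
    intro ψ
    rw [Real.cos_add, hca, hsa]
    field_simp
    ring
  have h2 : ψ0 - 2 * π / 3 + Real.arctan t = ψ0 + Real.arctan t - 2 * π / 3 := by ring
  simp only [ptv, dirv, Prod.mk_add_mk, Prod.smul_mk, smul_eq_mul, Prod.mk.injEq]
  constructor
  · exact key ψ0
  · rw [← h2]; exact key (ψ0 - 2 * π / 3)

lemma ptv_two_pi (r ψ : ℝ) (k : ℤ) : ptv r (ψ + k * (2 * π)) = ptv r ψ := by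
  simp only [ptv]
  rw [Real.cos_add_int_mul_two_pi]
  have : ψ + k * (2 * π) - 2 * π / 3 = (ψ - 2 * π / 3) + k * (2 * π) := by ring
  rw [this, Real.cos_add_int_mul_two_pi]

lemma ptv_add_pi (r ψ : ℝ) : ptv r (ψ + π) = ptv (-r) ψ := by
  simp only [ptv]
  have h : ψ + π - 2 * π / 3 = (ψ - 2 * π / 3) + π := by ring
  rw [Real.cos_add_pi, h, Real.cos_add_pi]
  simp only [Prod.mk.injEq]
  constructor <;> ring

lemma ptv_smul (a r ψ : ℝ) : a • ptv r ψ = ptv (a * r) ψ := by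
  simp only [ptv, Prod.smul_mk, smul_eq_mul, Prod.mk.injEq]
  constructor <;> ring

lemma ptv_add_radii (r s ψ : ℝ) : ptv r ψ + ptv s ψ = ptv (r + s) ψ := by
  simp only [ptv, Prod.mk_add_mk, Prod.mk.injEq]
  constructor <;> ring

/-- polar representation of a nonzero point -/
lemma exists_ptv {S : ℝ × ℝ} (hS : S ≠ 0) : ∃ r > 0, ∃ ψ, S = ptv r ψ := by
  have hq2 : 0 < S.1 ^ 2 + S.1 * S.2 + S.2 ^ 2 := by
    have h1 : S.1 ≠ 0 ∨ S.2 ≠ 0 := by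
      by_contra hc
      push_neg at hc
      exact hS (Prod.ext hc.1 hc.2)
    rcases h1 with h1 | h1 <;>
      nlinarith [sq_nonneg (S.1 + S.2), sq_nonneg (2 * S.1 + S.2), sq_nonneg (S.1 + 2 * S.2),
        mul_self_pos.mpr h1]
  set r := qf S with hrdef
  have hr2 : r ^ 2 = 3 * (S.1 ^ 2 + S.1 * S.2 + S.2 ^ 2) := by
    rw [hrdef, qf, Real.sq_sqrt (by linarith)]
  have hr : 0 < r := by
    rw [hrdef, qf]
    exact Real.sqrt_pos.2 (by linarith)
  set a : ℝ := 3 * S.1 / (2 * r) with hadef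
  set b : ℝ := Real.sqrt 3 * (S.1 + 2 * S.2) / (2 * r) with hbdef
  have h3 : Real.sqrt 3 ^ 2 = 3 := Real.sq_sqrt (by norm_num)
  have hab : a ^ 2 + b ^ 2 = 1 := by
    rw [hadef, hbdef]
    field_simp
    linear_combination (S.1 + 2 * S.2) ^ 2 * h3 + (-4) * hr2
  set z : ℂ := ⟨a, b⟩ with hzdef
  have habs : ‖z‖ = 1 := by
    rw [Complex.norm_def, Complex.normSq_mk]
    rw [show a * a + b * b = 1 by nlinarith [hab]]
    exact Real.sqrt_one
  have hz0 : z ≠ 0 := by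
    intro h
    rw [h] at habs
    simp at habs
  refine ⟨r, hr, Complex.arg z, ?_⟩
  have hcos : Real.cos (Complex.arg z) = a := by
    rw [Complex.cos_arg hz0, habs]; simp [hzdef]
  have hsin : Real.sin (Complex.arg z) = b := by
    rw [Complex.sin_arg, habs]; simp [hzdef]
  have hc2 : Real.cos (Complex.arg z - 2 * π / 3) = -(1/2) * a + (Real.sqrt 3 / 2) * b := by
    rw [cos_sub_expand, hcos, hsin]
  apply Prod.ext
  · show S.1 = r * (2 / 3 * Real.cos (Complex.arg z))
    rw [hcos, hadef]
    field_simp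
  · show S.2 = r * (2 / 3 * Real.cos (Complex.arg z - 2 * π / 3))
    rw [hc2, hadef, hbdef]
    field_simp
    linear_combination (-(S.1 + S.2 * 2)) * h3

/-! ### Slope helper lemmas -/

lemma slope_combo {f : ℝ → ℝ} {p q r : ℝ} (hpq : p < q) (hqr : q < r)
    (h : (f q - f p) / (q - p) ≤ (f r - f q) / (r - q)) :
    (f q - f p) / (q - p) ≤ (f r - f p) / (r - p) ∧
      (f r - f p) / (r - p) ≤ (f r - f q) / (r - q) := by
  have h1 : 0 < q - p := by linarith
  have h2 : 0 < r - q := by linarith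
  have h3 : 0 < r - p := by linarith
  set s1 := (f q - f p) / (q - p) with hs1
  set s2 := (f r - f q) / (r - q) with hs2
  have e1 : f q - f p = s1 * (q - p) := by rw [hs1]; field_simp
  have e2 : f r - f q = s2 * (r - q) := by rw [hs2]; field_simp
  have e3 : f r - f p = s1 * (q - p) + s2 * (r - q) := by linarith
  constructor
  · rw [le_div_iff₀ h3, e3]
    nlinarith
  · rw [div_le_iff₀ h3, e3]
    nlinarith

/-- convexity + one-sided derivative from the right: `d ≤ slope x y`. -/
lemma deriv_le_slope {f : ℝ → ℝ} {s : Set ℝ} (hf : ConvexOn ℝ s f) {x y d : ℝ}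
    (hx : x ∈ s) (hy : y ∈ s) (hxy : x < y) (hd : HasDerivWithinAt f d (Set.Ici x) x) :
    d ≤ (f y - f x) / (y - x) := by
  rw [hasDerivWithinAt_iff_tendsto_slope] at hd
  rw [Set.Ici_sdiff_left] at hd
  refine le_of_tendsto hd ?_
  have hev1 : ∀ᶠ u in nhdsWithin x (Set.Ioi x), u ∈ Set.Iio y :=
    Filter.eventually_of_mem (nhdsWithin_le_nhds (Iio_mem_nhds hxy)) (fun _ h => h)
  filter_upwards [hev1, eventually_mem_nhdsWithin] with u hu1 hu2
  have hus : u ∈ s := hf.1.ordConnected.out hx hy ⟨le_of_lt hu2, le_of_lt hu1⟩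
  have hadj := hf.slope_mono_adjacent hx hy hu2 hu1
  have h5 := (slope_combo hu2 hu1 hadj).1
  show slope f x u ≤ _
  rw [slope_def_field]
  exact h5

/-- convexity + one-sided derivative from the left: `slope x y ≤ d`. -/
lemma slope_le_deriv {f : ℝ → ℝ} {s : Set ℝ} (hf : ConvexOn ℝ s f) {x y d : ℝ}
    (hx : x ∈ s) (hy : y ∈ s) (hxy : x < y) (hd : HasDerivWithinAt f d (Set.Iic y) y) :
    (f y - f x) / (y - x) ≤ d := by
  rw [hasDerivWithinAt_iff_tendsto_slope] at hd
  rw [Set.Iic_diff_right] at hd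
  refine ge_of_tendsto hd ?_
  have hev1 : ∀ᶠ u in nhdsWithin y (Set.Iio y), u ∈ Set.Ioi x :=
    Filter.eventually_of_mem (nhdsWithin_le_nhds (Ioi_mem_nhds hxy)) (fun _ h => h)
  filter_upwards [hev1, eventually_mem_nhdsWithin] with u hu1 hu2
  have hus : u ∈ s := hf.1.ordConnected.out hx hy ⟨le_of_lt hu1, le_of_lt hu2⟩
  have hadj := hf.slope_mono_adjacent hx hy hu1 hu2
  have h5 := (slope_combo hu1 hu2 hadj).2
  show _ ≤ slope f y u
  rw [slope_def_field]
  have hu2' : u < y := hu2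
  calc (f y - f x) / (y - x) ≤ (f y - f u) / (y - u) := h5
  _ = (f u - f y) / (u - y) := by rw [div_eq_div_iff (by linarith) (by linarith)]; ring

/-- gluing convex functions at a point with increasing one-sided derivatives -/
lemma glue_convexOn {f : ℝ → ℝ} {b c la ra : ℝ} {t : Set ℝ}
    (hbc : b < c) (hct : Set.Icc b c ⊆ t) (htb : t ⊆ Set.Ici b)
    (hs : ConvexOn ℝ (Set.Iic b) f) (ht : ConvexOn ℝ t f)
    (hL : HasDerivWithinAt f la (Set.Iic b) b)
    (hR : HasDerivWithinAt f ra (Set.Ici b) b)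
    (hlr : la ≤ ra) :
    ConvexOn ℝ (Set.Iic b ∪ t) f := by
  have hbt : b ∈ t := hct ⟨le_refl b, hbc.le⟩
  have hbs : b ∈ Set.Iic b := le_refl b
  -- the bridging inequality
  have bridge : ∀ u w, u < b → b < w → w ∈ t →
      (f b - f u) / (b - u) ≤ (f w - f b) / (w - b) := by
    intro u w hub hbw hwt
    have h1 : (f b - f u) / (b - u) ≤ la :=
      slope_le_deriv hs (le_of_lt hub) hbs hub hL
    have h2 : ra ≤ (f w - f b) / (w - b) :=
      deriv_le_slope ht hbt hwt hbw hR
    linarith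
  have hcvx : Convex ℝ (Set.Iic b ∪ t) := by
    rw [convex_iff_ordConnected]
    constructor
    intro x hx y hy z hz
    rcases le_or_gt z b with hzb | hbz
    · exact Or.inl hzb
    · rcases hy with hy | hy
      · have : z ≤ b := le_trans hz.2 hy
        exact absurd this (not_le.mpr hbz)
      · exact Or.inr (ht.1.ordConnected.out hbt hy ⟨hbz.le, hz.2⟩)
  refine convexOn_of_slope_mono_adjacent hcvx ?_
  intro u w v hu hv huw hwv
  rcases le_or_gt v b with hvb | hbv
  · -- all in Iic b
    have hu' : u ∈ Set.Iic b := by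
      rcases hu with h | h
      · exact h
      · exact le_trans (le_of_lt (lt_trans huw hwv)) hvb
    exact hs.slope_mono_adjacent hu' hvb huw hwv
  · rcases le_or_gt b u with hbu | hub
    · -- all in t
      have hu' : u ∈ t := by
        rcases hu with h | h
        · have : u = b := le_antisymm h hbu
          rw [this]; exact hbt
        · exact h
      have hv' : v ∈ t := by
        rcases hv with h | h
        · exact absurd (lt_of_lt_of_le (lt_trans huw hwv) h) (not_lt.mpr hbu)
        · exact h
      exact ht.slope_mono_adjacent hu' hv' huw hwv
    · -- u < b < v
      have hv' : v ∈ t := by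
        rcases hv with h | h
        · exact absurd (lt_of_lt_of_le hbv h) (lt_irrefl b)
        · exact h
      rcases lt_trichotomy w b with hwb | hwb | hwb
      · -- u < w < b < v
        have h1 : (f w - f u) / (w - u) ≤ (f b - f w) / (b - w) :=
          hs.slope_mono_adjacent (le_of_lt hub) hbs huw hwb
        have h2 : (f b - f w) / (b - w) ≤ (f v - f b) / (v - b) := bridge w v hwb hbv hv'
        have h3 := (slope_combo hwb hbv h2).1
        linarith
      · -- w = b
        rw [hwb]
        exact bridge u v hub hbv hv'
      · -- u < b < w < v
        have h1 : (f w - f b) / (w - b) ≤ (f v - f w) / (v - w) := by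
          have hwt : w ∈ t := ht.1.ordConnected.out hbt hv' ⟨hwb.le, hwv.le⟩
          exact ht.slope_mono_adjacent hbt hv' hwb hwv
        have h2 : (f b - f u) / (b - u) ≤ (f w - f b) / (w - b) := by
          have hwt : w ∈ t := ht.1.ordConnected.out hbt hv' ⟨hwb.le, hwv.le⟩
          exact bridge u w hub hwb hwt
        have h3 := (slope_combo hub hwb h2).2
        linarith

/-! ### Derivative computations for the line restriction -/

/-- the smooth model for `cfun` on a piece where `fold` is affine -/
noncomputable def mfun (g : ℝ → ℝ) (σ ψ0 κ t : ℝ) : ℝ :=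
  Real.sqrt (1 + t ^ 2) / g (σ * (ψ0 + Real.arctan t) + κ)

/-- first derivative of `mfun` -/
noncomputable def c1fun (g : ℝ → ℝ) (σ ψ0 κ t : ℝ) : ℝ :=
  (t * g (σ * (ψ0 + Real.arctan t) + κ) - σ * deriv g (σ * (ψ0 + Real.arctan t) + κ)) /
    ((g (σ * (ψ0 + Real.arctan t) + κ)) ^ 2 * Real.sqrt (1 + t ^ 2))

lemma hasDerivAt_theta (σ ψ0 κ t : ℝ) :
    HasDerivAt (fun u => σ * (ψ0 + Real.arctan u) + κ) (σ / (1 + t ^ 2)) t := by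
  have h := (((Real.hasDerivAt_arctan t).const_add ψ0).const_mul σ).add_const κ
  convert h using 1 <;> try rfl
  field_simp

lemma hasDerivAt_sqrt1t (t : ℝ) :
    HasDerivAt (fun u : ℝ => Real.sqrt (1 + u ^ 2)) (t / Real.sqrt (1 + t ^ 2)) t := by
  have h1 : HasDerivAt (fun u : ℝ => 1 + u ^ 2) (2 * t) t := by
    simpa using (hasDerivAt_pow 2 t).const_add 1
  have h2 := (Real.hasDerivAt_sqrt (by positivity : (1:ℝ) + t ^ 2 ≠ 0)).comp t h1
  convert h2 using 1 <;> try rfl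
  have hsp := sqrt_one_add_sq_pos t
  field_simp

lemma hasDerivAt_mfun {g : ℝ → ℝ} {σ ψ0 κ t : ℝ}
    (hgd : DifferentiableAt ℝ g (σ * (ψ0 + Real.arctan t) + κ))
    (hne : g (σ * (ψ0 + Real.arctan t) + κ) ≠ 0) :
    HasDerivAt (mfun g σ ψ0 κ) (c1fun g σ ψ0 κ t) t := by
  set θ := σ * (ψ0 + Real.arctan t) + κ with hθdef
  have hθ := hasDerivAt_theta σ ψ0 κ t
  have hg : HasDerivAt (fun u => g (σ * (ψ0 + Real.arctan u) + κ))
      (deriv g θ * (σ / (1 + t ^ 2))) t := hgd.hasDerivAt.comp t hθ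
  have hs := hasDerivAt_sqrt1t t
  have hd := hs.div hg hne
  convert hd using 1 <;> try rfl
  unfold c1fun
  rw [← hθdef]
  have hsp := sqrt_one_add_sq_pos t
  set s := Real.sqrt (1 + t ^ 2) with hsdef
  have h2 : s ^ 2 = 1 + t ^ 2 := Real.sq_sqrt (by positivity)
  have h3 : s ^ 3 = (1 + t ^ 2) * s := by rw [pow_succ, h2]
  have h4 : s ^ 4 = (1 + t ^ 2) ^ 2 := by rw [show (4:ℕ) = 2*2 by norm_num, pow_mul, h2]
  have h5 : s ^ 5 = (1 + t ^ 2) ^ 2 * s := by rw [pow_succ, h4]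
  have h6 : s ^ 6 = (1 + t ^ 2) ^ 3 := by rw [show (6:ℕ) = 2*3 by norm_num, pow_mul, h2]
  have hu : (1:ℝ) + t ^ 2 ≠ 0 := by positivity
  field_simp
  ring_nf
  simp only [h6, h5, h4, h3, h2]
  ring

lemma hasDerivAt_c1fun {g : ℝ → ℝ} {σ ψ0 κ t : ℝ} (hσ : σ = 1 ∨ σ = -1)
    (hgd : DifferentiableAt ℝ g (σ * (ψ0 + Real.arctan t) + κ))
    (hgd2 : DifferentiableAt ℝ (deriv g) (σ * (ψ0 + Real.arctan t) + κ))
    (hne : g (σ * (ψ0 + Real.arctan t) + κ) ≠ 0) :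
    HasDerivAt (c1fun g σ ψ0 κ)
      ((g (σ * (ψ0 + Real.arctan t) + κ) ^ 2
          + 2 * (deriv g (σ * (ψ0 + Real.arctan t) + κ)) ^ 2
          - g (σ * (ψ0 + Real.arctan t) + κ) * deriv (deriv g) (σ * (ψ0 + Real.arctan t) + κ)) /
        ((g (σ * (ψ0 + Real.arctan t) + κ)) ^ 3 * ((1 + t ^ 2) * Real.sqrt (1 + t ^ 2)))) t := by
  set θ := σ * (ψ0 + Real.arctan t) + κ with hθdef
  have hθ := hasDerivAt_theta σ ψ0 κ t
  have hg : HasDerivAt (fun u => g (σ * (ψ0 + Real.arctan u) + κ))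
      (deriv g θ * (σ / (1 + t ^ 2))) t := hgd.hasDerivAt.comp t hθ
  have hg2 : HasDerivAt (fun u => deriv g (σ * (ψ0 + Real.arctan u) + κ))
      (deriv (deriv g) θ * (σ / (1 + t ^ 2))) t := by
    have := hgd2.hasDerivAt.comp t hθ; exact this
  have hs := hasDerivAt_sqrt1t t
  have hN : HasDerivAt (fun u => u * g (σ * (ψ0 + Real.arctan u) + κ)
      - σ * deriv g (σ * (ψ0 + Real.arctan u) + κ))
      (1 * g θ + t * (deriv g θ * (σ / (1 + t ^ 2)))
        - σ * (deriv (deriv g) θ * (σ / (1 + t ^ 2)))) t :=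
    ((hasDerivAt_id t).mul hg).sub (hg2.const_mul σ)
  have hD : HasDerivAt (fun u => (g (σ * (ψ0 + Real.arctan u) + κ)) ^ 2 * Real.sqrt (1 + u ^ 2))
      ((2 * g θ ^ 1 * (deriv g θ * (σ / (1 + t ^ 2)))) * Real.sqrt (1 + t ^ 2)
        + (g θ) ^ 2 * (t / Real.sqrt (1 + t ^ 2))) t := by
    have h := (hg.pow 2).mul hs
    convert h using 1 <;> try rfl
    all_goals norm_num
  have hsp := sqrt_one_add_sq_pos t
  have hsq : (Real.sqrt (1 + t ^ 2)) ^ 2 = 1 + t ^ 2 := Real.sq_sqrt (by positivity)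
  have hu : (1:ℝ) + t ^ 2 ≠ 0 := by positivity
  have hDne : (g θ) ^ 2 * Real.sqrt (1 + t ^ 2) ≠ 0 := by positivity
  have hd := hN.div hD hDne
  convert hd using 1 <;> try rfl
  rw [← hθdef]
  set s := Real.sqrt (1 + t ^ 2) with hsdef
  have h2 : s ^ 2 = 1 + t ^ 2 := Real.sq_sqrt (by positivity)
  have h3 : s ^ 3 = (1 + t ^ 2) * s := by rw [pow_succ, h2]
  have h4 : s ^ 4 = (1 + t ^ 2) ^ 2 := by rw [show (4:ℕ) = 2*2 by norm_num, pow_mul, h2]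
  have h5 : s ^ 5 = (1 + t ^ 2) ^ 2 * s := by rw [pow_succ, h4]
  have h6 : s ^ 6 = (1 + t ^ 2) ^ 3 := by rw [show (6:ℕ) = 2*3 by norm_num, pow_mul, h2]
  have h7 : s ^ 7 = (1 + t ^ 2) ^ 3 * s := by rw [pow_succ, h6]
  have h8 : s ^ 8 = (1 + t ^ 2) ^ 4 := by rw [show (8:ℕ) = 2*4 by norm_num, pow_mul, h2]
  have hu : (1:ℝ) + t ^ 2 ≠ 0 := by positivity
  rcases hσ with h | h <;> subst h <;> field_simp <;> ring_nf <;>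
    simp only [h8, h7, h6, h5, h4, h3, h2] <;> try ring

/-! ### One-sided derivative of `cfun` at kinks and piece convexity -/

lemma hasDerivWithinAt_cfun {g : ℝ → ℝ} {σ ψ0 κ x gd : ℝ} {st sg : Set ℝ}
    (hfold : ∀ t ∈ st, fold (ψ0 + Real.arctan t) = σ * (ψ0 + Real.arctan t) + κ)
    (hfoldx : fold (ψ0 + Real.arctan x) = σ * (ψ0 + Real.arctan x) + κ)
    (hmaps : Set.MapsTo (fun t => σ * (ψ0 + Real.arctan t) + κ) st sg)
    (hgd : HasDerivWithinAt g gd sg (σ * (ψ0 + Real.arctan x) + κ))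
    (hne : g (σ * (ψ0 + Real.arctan x) + κ) ≠ 0) :
    HasDerivWithinAt (cfun g ψ0)
      ((x * g (σ * (ψ0 + Real.arctan x) + κ) - σ * gd) /
        ((g (σ * (ψ0 + Real.arctan x) + κ)) ^ 2 * Real.sqrt (1 + x ^ 2))) st x := by
  set θx := σ * (ψ0 + Real.arctan x) + κ with hθdef
  have hθ := (hasDerivAt_theta σ ψ0 κ x).hasDerivWithinAt (s := st)
  have hg : HasDerivWithinAt (fun u => g (σ * (ψ0 + Real.arctan u) + κ))
      (gd * (σ / (1 + x ^ 2))) st x := hgd.comp x hθ hmaps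
  have hs := (hasDerivAt_sqrt1t x).hasDerivWithinAt (s := st)
  have hd := hs.div hg hne
  have hcongr : HasDerivWithinAt (cfun g ψ0)
      ((x / Real.sqrt (1 + x ^ 2) * g θx - Real.sqrt (1 + x ^ 2) * (gd * (σ / (1 + x ^ 2)))) /
        (g θx) ^ 2) st x := by
    refine hd.congr ?_ ?_
    · intro t ht
      unfold cfun
      rw [hfold t ht]
      rfl
    · unfold cfun
      rw [hfoldx]
      rfl
  convert hcongr using 1
  have hsp := sqrt_one_add_sq_pos x
  set s := Real.sqrt (1 + x ^ 2) with hsdef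
  have h2 : s ^ 2 = 1 + x ^ 2 := Real.sq_sqrt (by positivity)
  have h3 : s ^ 3 = (1 + x ^ 2) * s := by rw [pow_succ, h2]
  have h4 : s ^ 4 = (1 + x ^ 2) ^ 2 := by rw [show (4:ℕ) = 2*2 by norm_num, pow_mul, h2]
  have hu : (1:ℝ) + x ^ 2 ≠ 0 := by positivity
  field_simp
  ring_nf
  simp only [h4, h3, h2]
  ring

lemma convex_arctan_preimage (ψ0 : ℝ) (s : Set ℝ) (hs : s.OrdConnected) :
    Convex ℝ {t | ψ0 + Real.arctan t ∈ s} := by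
  rw [convex_iff_ordConnected]
  constructor
  intro x hx y hy z hz
  exact hs.out hx hy ⟨by
    have := Real.arctan_strictMono.monotone hz.1; linarith,
    by have := Real.arctan_strictMono.monotone hz.2; linarith⟩

lemma piece_convexOn {g : ℝ → ℝ}
    (hgc : ContinuousOn g (Set.Icc 0 (π / 3)))
    (hgpos : ∀ t ∈ Set.Icc 0 (π / 3), 0 < g t)
    (hgd : ∀ t ∈ Set.Ioo 0 (π / 3),
      DifferentiableAt ℝ g t ∧ DifferentiableAt ℝ (deriv g) t)
    (hcond : ∀ t ∈ Set.Ioo 0 (π / 3),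
      0 ≤ g t ^ 2 + 2 * (deriv g t) ^ 2 - g t * deriv (deriv g) t)
    {σ κ ψ0 a b : ℝ} (hσ : σ = 1 ∨ σ = -1)
    (hab : ∀ ψ, a ≤ ψ → ψ ≤ b → fold ψ = σ * ψ + κ)
    (hrange' : ∀ ψ, a < ψ → ψ < b → σ * ψ + κ ∈ Set.Ioo 0 (π / 3)) :
    ConvexOn ℝ {t | ψ0 + Real.arctan t ∈ Set.Icc a b} (cfun g ψ0) := by
  set D := {t | ψ0 + Real.arctan t ∈ Set.Icc a b} with hDdef
  set U := {t | ψ0 + Real.arctan t ∈ Set.Ioo a b} with hUdef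
  have hDconv : Convex ℝ D := convex_arctan_preimage ψ0 _ Set.ordConnected_Icc
  have hψc : Continuous fun t : ℝ => ψ0 + Real.arctan t :=
    continuous_const.add Real.continuous_arctan
  have hUopen : IsOpen U := isOpen_Ioo.preimage hψc
  have hUD : U ⊆ D := fun t ht => ⟨ht.1.le, ht.2.le⟩
  have hintD : interior D ⊆ U := by
    intro t ht
    rw [mem_interior_iff_mem_nhds, Metric.mem_nhds_iff] at ht
    obtain ⟨ε, hε, hball⟩ := ht
    have h1 : t - ε / 2 ∈ D := hball (by
      rw [Metric.mem_ball, Real.dist_eq, abs_lt]; constructor <;> linarith)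
    have h2 : t + ε / 2 ∈ D := hball (by
      rw [Metric.mem_ball, Real.dist_eq, abs_lt]; constructor <;> linarith)
    have hm1 : Real.arctan (t - ε / 2) < Real.arctan t :=
      Real.arctan_strictMono (by linarith)
    have hm2 : Real.arctan t < Real.arctan (t + ε / 2) :=
      Real.arctan_strictMono (by linarith)
    exact ⟨lt_of_le_of_lt h1.1 (by linarith), lt_of_lt_of_le (by linarith) h2.2⟩
  have hfoldmem : ∀ t : ℝ, fold (ψ0 + Real.arctan t) ∈ Set.Icc 0 (π / 3) :=
    fun t => fold_mem _
  have hcont : ContinuousOn (cfun g ψ0) D := by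
    apply ContinuousOn.div
    · exact (continuous_const.add (continuous_pow 2)).sqrt.continuousOn
    · exact (hgc.comp ((fold_continuous.comp hψc).continuousOn)
        (fun t _ => hfoldmem t))
    · exact fun t _ => (hgpos _ (hfoldmem t)).ne'
  -- pointwise derivative facts on U
  have hkey : ∀ t ∈ U, HasDerivAt (cfun g ψ0) (c1fun g σ ψ0 κ t) t ∧
      HasDerivAt (c1fun g σ ψ0 κ)
        ((g (σ * (ψ0 + Real.arctan t) + κ) ^ 2
          + 2 * (deriv g (σ * (ψ0 + Real.arctan t) + κ)) ^ 2
          - g (σ * (ψ0 + Real.arctan t) + κ)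
            * deriv (deriv g) (σ * (ψ0 + Real.arctan t) + κ)) /
        ((g (σ * (ψ0 + Real.arctan t) + κ)) ^ 3
          * ((1 + t ^ 2) * Real.sqrt (1 + t ^ 2)))) t := by
    intro t ht
    have hθIoo : σ * (ψ0 + Real.arctan t) + κ ∈ Set.Ioo 0 (π / 3) :=
      hrange' _ ht.1 ht.2
    have hne : g (σ * (ψ0 + Real.arctan t) + κ) ≠ 0 :=
      (hgpos _ ⟨hθIoo.1.le, hθIoo.2.le⟩).ne'
    have hEq : cfun g ψ0 =ᶠ[nhds t] mfun g σ ψ0 κ := by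
      filter_upwards [hUopen.mem_nhds ht] with u hu
      unfold cfun mfun
      rw [hab _ hu.1.le hu.2.le]
    constructor
    · exact (hasDerivAt_mfun (hgd _ hθIoo).1 hne).congr_of_eventuallyEq hEq
    · exact hasDerivAt_c1fun hσ (hgd _ hθIoo).1 (hgd _ hθIoo).2 hne
  have hderiv_eq : ∀ t ∈ U, deriv (cfun g ψ0) t = c1fun g σ ψ0 κ t :=
    fun t ht => ((hkey t ht).1).deriv
  apply convexOn_of_deriv2_nonneg hDconv hcont
  · intro t ht
    exact ((hkey t (hintD ht)).1).differentiableAt.differentiableWithinAt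
  · intro t ht
    have hEq' : deriv (cfun g ψ0) =ᶠ[nhds t] c1fun g σ ψ0 κ := by
      filter_upwards [hUopen.mem_nhds (hintD ht)] with u hu
      exact hderiv_eq u hu
    exact (hEq'.differentiableAt_iff.2 ((hkey t (hintD ht)).2).differentiableAt).differentiableWithinAt
  · intro t ht
    have htU := hintD ht
    have hEq' : deriv (cfun g ψ0) =ᶠ[nhds t] c1fun g σ ψ0 κ := by
      filter_upwards [hUopen.mem_nhds htU] with u hu
      exact hderiv_eq u hu
    have h2 : deriv^[2] (cfun g ψ0) t = deriv (deriv (cfun g ψ0)) t := by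
      simp [Function.iterate_succ_apply', Function.iterate_zero_apply]
    rw [h2, hEq'.deriv_eq, ((hkey t htU).2).deriv]
    have hθIoo : σ * (ψ0 + Real.arctan t) + κ ∈ Set.Ioo 0 (π / 3) :=
      hrange' _ htU.1 htU.2
    have hgpos' : 0 < g (σ * (ψ0 + Real.arctan t) + κ) :=
      hgpos _ ⟨hθIoo.1.le, hθIoo.2.le⟩
    apply div_nonneg (hcond _ hθIoo)
    positivity

/-! ### Gluing pieces across kinks -/

lemma arctan_le_iff_of_lt {w ψ0 : ℝ} (h1 : -(π/2) < w - ψ0) (h2 : w - ψ0 < π/2) (t : ℝ) :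
    ψ0 + Real.arctan t ≤ w ↔ t ≤ Real.tan (w - ψ0) := by
  constructor
  · intro h
    have h3 : Real.arctan t ≤ Real.arctan (Real.tan (w - ψ0)) := by
      rw [Real.arctan_tan h1 h2]; linarith
    exact Real.arctan_strictMono.le_iff_le.mp h3
  · intro h
    have h3 := Real.arctan_strictMono.monotone h
    rw [Real.arctan_tan h1 h2] at h3
    linarith

lemma glue_step {g : ℝ → ℝ}
    (hgc : ContinuousOn g (Set.Icc 0 (π / 3)))
    (hgpos : ∀ t ∈ Set.Icc 0 (π / 3), 0 < g t)
    (hgd : ∀ t ∈ Set.Ioo 0 (π / 3),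
      DifferentiableAt ℝ g t ∧ DifferentiableAt ℝ (deriv g) t)
    (hcond : ∀ t ∈ Set.Ioo 0 (π / 3),
      0 ≤ g t ^ 2 + 2 * (deriv g t) ^ 2 - g t * deriv (deriv g) t)
    {ψ0 ψk σL κL σR κR v gd : ℝ} {sg : Set ℝ}
    (hσL : σL = 1 ∨ σL = -1) (hσR : σR = 1 ∨ σR = -1)
    (hk1 : -(π/2) < ψk - ψ0) (hk2 : ψk - ψ0 < π/2)
    (hfoldL : ∀ ψ, ψk - π/3 ≤ ψ → ψ ≤ ψk → fold ψ = σL * ψ + κL)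
    (hfoldR : ∀ ψ, ψk ≤ ψ → ψ ≤ ψk + π/3 → fold ψ = σR * ψ + κR)
    (hrangeR' : ∀ ψ, ψk < ψ → ψ < ψk + π/3 → σR * ψ + κR ∈ Set.Ioo 0 (π/3))
    (hmapL : ∀ ψ, ψk - π/3 ≤ ψ → ψ ≤ ψk → σL * ψ + κL ∈ sg)
    (hmapR : ∀ ψ, ψk ≤ ψ → ψ ≤ ψk + π/3 → σR * ψ + κR ∈ sg)
    (hvL : σL * ψk + κL = v) (hvR : σR * ψk + κR = v)
    (hgdv : HasDerivWithinAt g gd sg v)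
    (hvpos : 0 < g v)
    (hineq : σR * gd ≤ σL * gd)
    (hprev : ConvexOn ℝ {t | ψ0 + Real.arctan t ≤ ψk} (cfun g ψ0)) :
    ConvexOn ℝ {t | ψ0 + Real.arctan t ≤ ψk + π/3} (cfun g ψ0) := by
  have hpi : (0:ℝ) < π := Real.pi_pos
  set b := Real.tan (ψk - ψ0) with hbdef
  have harcb : Real.arctan b = ψk - ψ0 := Real.arctan_tan hk1 hk2
  have hψb : ψ0 + Real.arctan b = ψk := by rw [harcb]; ring
  have hAk : {t : ℝ | ψ0 + Real.arctan t ≤ ψk} = Set.Iic b := by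
    ext t; exact arctan_le_iff_of_lt hk1 hk2 t
  -- right endpoint c
  set δc := min (ψk + π/3 - ψ0) ((ψk - ψ0 + π/2)/2) with hδcdef
  have hδc1 : ψk - ψ0 < δc := by
    apply lt_min (by linarith) (by linarith)
  have hδc2 : δc < π/2 := by
    rw [hδcdef]
    have h := min_le_right (ψk + π/3 - ψ0) ((ψk - ψ0 + π/2)/2)
    linarith
  have hδc3 : -(π/2) < δc := lt_trans hk1 hδc1
  have hδc4 : ψ0 + δc ≤ ψk + π/3 := by
    rw [hδcdef]
    have h := min_le_left (ψk + π/3 - ψ0) ((ψk - ψ0 + π/2)/2)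
    linarith
  set c := Real.tan δc with hcdef
  have harcc : Real.arctan c = δc := Real.arctan_tan hδc3 hδc2
  have hbc : b < c := by
    rw [← Real.arctan_strictMono.lt_iff_lt, harcb, harcc]; exact hδc1
  -- the right piece
  set T := {t : ℝ | ψ0 + Real.arctan t ∈ Set.Icc ψk (ψk + π/3)} with hTdef
  have hT : ConvexOn ℝ T (cfun g ψ0) :=
    piece_convexOn hgc hgpos hgd hcond hσR hfoldR hrangeR'
  have hct : Set.Icc b c ⊆ T := by
    intro t ht
    have h1 : Real.arctan b ≤ Real.arctan t := Real.arctan_strictMono.monotone ht.1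
    have h2 : Real.arctan t ≤ Real.arctan c := Real.arctan_strictMono.monotone ht.2
    rw [harcb] at h1; rw [harcc] at h2
    exact ⟨by linarith, by linarith⟩
  have htIci : T ⊆ Set.Ici b := by
    intro t ht
    have : Real.arctan b ≤ Real.arctan t := by rw [harcb]; linarith [ht.1]
    exact Real.arctan_strictMono.le_iff_le.mp this
  -- left one-sided derivative at b
  set δa := max (ψk - π/3 - ψ0) ((ψk - ψ0 - π/2)/2) with hδadef
  have hδa1 : δa < ψk - ψ0 := max_lt (by linarith) (by linarith)
  have hδa2 : -(π/2) < δa := lt_of_lt_of_le (by linarith) (le_max_right _ _)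
  have hδa3 : δa < π/2 := lt_trans hδa1 hk2
  have hδa4 : ψk - π/3 ≤ ψ0 + δa := by
    rw [hδadef]
    have h := le_max_left (ψk - π/3 - ψ0) ((ψk - ψ0 - π/2)/2)
    linarith
  set a := Real.tan δa with hadef
  have harca : Real.arctan a = δa := Real.arctan_tan hδa2 hδa3
  have hab : a < b := by
    rw [← Real.arctan_strictMono.lt_iff_lt, harca, harcb]; exact hδa1
  have hL0 : HasDerivWithinAt (cfun g ψ0)
      ((b * g v - σL * gd) / ((g v) ^ 2 * Real.sqrt (1 + b ^ 2)))
      (Set.Icc a b) b := by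
    have hgdv' : HasDerivWithinAt g gd sg (σL * (ψ0 + Real.arctan b) + κL) := by
      rw [hψb, hvL]; exact hgdv
    have h := hasDerivWithinAt_cfun (st := Set.Icc a b) (sg := sg)
      (σ := σL) (ψ0 := ψ0) (κ := κL) (x := b) (gd := gd)
      ?_ ?_ ?_ hgdv' ?_
    · rw [hψb, hvL] at h; exact h
    · intro t ht
      have h1 : Real.arctan a ≤ Real.arctan t := Real.arctan_strictMono.monotone ht.1
      have h2 : Real.arctan t ≤ Real.arctan b := Real.arctan_strictMono.monotone ht.2
      rw [harca] at h1; rw [harcb] at h2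
      exact hfoldL _ (by linarith) (by linarith)
    · rw [hψb]
      exact hfoldL _ (by linarith) (le_refl _)
    · intro t ht
      have h1 : Real.arctan a ≤ Real.arctan t := Real.arctan_strictMono.monotone ht.1
      have h2 : Real.arctan t ≤ Real.arctan b := Real.arctan_strictMono.monotone ht.2
      rw [harca] at h1; rw [harcb] at h2
      exact hmapL _ (by linarith) (by linarith)
    · rw [hψb, hvL]; exact hvpos.ne'
  have hL : HasDerivWithinAt (cfun g ψ0)
      ((b * g v - σL * gd) / ((g v) ^ 2 * Real.sqrt (1 + b ^ 2))) (Set.Iic b) b :=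
    hL0.mono_of_mem_nhdsWithin (by
      rw [← nhdsWithin_Icc_eq_nhdsLE hab]
      exact self_mem_nhdsWithin)
  -- right one-sided derivative at b
  have hR0 : HasDerivWithinAt (cfun g ψ0)
      ((b * g v - σR * gd) / ((g v) ^ 2 * Real.sqrt (1 + b ^ 2)))
      (Set.Icc b c) b := by
    have hgdv' : HasDerivWithinAt g gd sg (σR * (ψ0 + Real.arctan b) + κR) := by
      rw [hψb, hvR]; exact hgdv
    have h := hasDerivWithinAt_cfun (st := Set.Icc b c) (sg := sg)
      (σ := σR) (ψ0 := ψ0) (κ := κR) (x := b) (gd := gd)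
      ?_ ?_ ?_ hgdv' ?_
    · rw [hψb, hvR] at h; exact h
    · intro t ht
      have h1 : Real.arctan b ≤ Real.arctan t := Real.arctan_strictMono.monotone ht.1
      have h2 : Real.arctan t ≤ Real.arctan c := Real.arctan_strictMono.monotone ht.2
      rw [harcb] at h1; rw [harcc] at h2
      exact hfoldR _ (by linarith) (by linarith)
    · rw [hψb]
      exact hfoldR _ (le_refl _) (by linarith)
    · intro t ht
      have h1 : Real.arctan b ≤ Real.arctan t := Real.arctan_strictMono.monotone ht.1
      have h2 : Real.arctan t ≤ Real.arctan c := Real.arctan_strictMono.monotone ht.2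
      rw [harcb] at h1; rw [harcc] at h2
      exact hmapR _ (by linarith) (by linarith)
    · rw [hψb, hvR]; exact hvpos.ne'
  have hR : HasDerivWithinAt (cfun g ψ0)
      ((b * g v - σR * gd) / ((g v) ^ 2 * Real.sqrt (1 + b ^ 2))) (Set.Ici b) b :=
    hR0.mono_of_mem_nhdsWithin (by
      rw [← nhdsWithin_Icc_eq_nhdsGE hbc]
      exact self_mem_nhdsWithin)
  have hlr : (b * g v - σL * gd) / ((g v) ^ 2 * Real.sqrt (1 + b ^ 2))
      ≤ (b * g v - σR * gd) / ((g v) ^ 2 * Real.sqrt (1 + b ^ 2)) := by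
    have hD : 0 < (g v) ^ 2 * Real.sqrt (1 + b ^ 2) := by
      have := sqrt_one_add_sq_pos b
      positivity
    exact (div_le_div_iff_of_pos_right hD).mpr (by linarith)
  have hglue := glue_convexOn hbc hct htIci (hAk ▸ hprev) hT hL hR hlr
  have hsets : Set.Iic b ∪ T = {t : ℝ | ψ0 + Real.arctan t ≤ ψk + π/3} := by
    ext t
    constructor
    · rintro (h | h)
      · have h4 : Real.arctan t ≤ Real.arctan b := Real.arctan_strictMono.monotone h
        rw [harcb] at h4
        show ψ0 + Real.arctan t ≤ ψk + π/3
        linarith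
      · exact h.2
    · intro h
      rcases le_or_gt (ψ0 + Real.arctan t) ψk with h1 | h1
      · exact Or.inl ((arctan_le_iff_of_lt hk1 hk2 t).mp h1)
      · exact Or.inr ⟨h1.le, h⟩
  rw [hsets] at hglue
  exact hglue

/-! ### fold formulas on the five pieces -/

lemma foldA : ∀ ψ : ℝ, -(2*π/3) ≤ ψ → ψ ≤ -(π/3) → fold ψ = 1 * ψ + 2*π/3 := by
  intro ψ h1 h2
  have h := fold_period ψ
  rw [← h, fold_eq_self (by linarith) (by linarith)]
  ring

lemma foldB : ∀ ψ : ℝ, -(π/3) ≤ ψ → ψ ≤ 0 → fold ψ = (-1) * ψ + 0 := by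
  intro ψ h1 h2
  rw [← fold_neg ψ, fold_eq_self (by linarith) (by linarith)]
  ring

lemma foldC : ∀ ψ : ℝ, 0 ≤ ψ → ψ ≤ π/3 → fold ψ = 1 * ψ + 0 := by
  intro ψ h1 h2
  rw [fold_eq_self h1 h2]; ring

lemma foldD : ∀ ψ : ℝ, π/3 ≤ ψ → ψ ≤ 2*π/3 → fold ψ = (-1) * ψ + 2*π/3 := by
  intro ψ h1 h2
  rw [← fold_neg ψ, ← fold_period (-ψ), fold_eq_self (by linarith) (by linarith)]
  ring

lemma foldE : ∀ ψ : ℝ, 2*π/3 ≤ ψ → ψ ≤ π → fold ψ = 1 * ψ + -(2*π/3) := by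
  intro ψ h1 h2
  rw [← fold_sub_period ψ, fold_eq_self (by linarith) (by linarith)]
  ring

/-! ### `cfun` is convex for base angles -/

lemma cfun_convexOn_base {g : ℝ → ℝ} {gd0 gdpi : ℝ}
    (hgc : ContinuousOn g (Set.Icc 0 (π / 3)))
    (hgpos : ∀ t ∈ Set.Icc 0 (π / 3), 0 < g t)
    (hgd : ∀ t ∈ Set.Ioo 0 (π / 3),
      DifferentiableAt ℝ g t ∧ DifferentiableAt ℝ (deriv g) t)
    (h0 : HasDerivWithinAt g gd0 (Set.Ici 0) 0)
    (hpi : HasDerivWithinAt g gdpi (Set.Iic (π / 3)) (π / 3))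
    (hcond : ∀ t ∈ Set.Ioo 0 (π / 3),
      0 ≤ g t ^ 2 + 2 * (deriv g t) ^ 2 - g t * deriv (deriv g) t)
    (hgd0neg : gd0 ≤ 0) (hgdpipos : 0 ≤ gdpi)
    {ψ0 : ℝ} (hψ0a : 0 ≤ ψ0) (hψ0b : ψ0 ≤ π / 3) :
    ConvexOn ℝ Set.univ (cfun g ψ0) := by
  have hπ : (0:ℝ) < π := Real.pi_pos
  have hg3 : 0 < g (π/3) := hgpos _ ⟨by positivity, le_refl _⟩
  have hg0 : 0 < g 0 := hgpos _ ⟨le_refl _, by positivity⟩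
  have harcb1 : ∀ t : ℝ, -(π/2) < Real.arctan t := fun t => Real.neg_pi_div_two_lt_arctan t
  have harcb2 : ∀ t : ℝ, Real.arctan t < π/2 := fun t => Real.arctan_lt_pi_div_two t
  -- base : convex on {ψ ≤ -π/3}
  have hA : ConvexOn ℝ {t : ℝ | ψ0 + Real.arctan t ≤ -(π/3)} (cfun g ψ0) := by
    have hpiece := piece_convexOn (a := -(2*π/3)) (b := -(π/3)) (σ := 1) (κ := 2*π/3)
      (ψ0 := ψ0) hgc hgpos hgd hcond (Or.inl rfl) foldA
      (fun ψ h1 h2 => ⟨by linarith, by linarith⟩)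
    refine hpiece.subset ?_ (convex_arctan_preimage ψ0 _ Set.ordConnected_Iic)
    intro t ht
    simp only [Set.mem_setOf_eq, Set.mem_Icc] at ht ⊢
    exact ⟨by linarith [harcb1 t], ht⟩
  -- up to {ψ ≤ 0}
  have hB : ConvexOn ℝ {t : ℝ | ψ0 + Real.arctan t ≤ 0} (cfun g ψ0) := by
    rcases lt_or_ge ψ0 (π/6) with hc | hc
    · have hstep := glue_step (ψk := -(π/3)) (σL := 1) (κL := 2*π/3) (σR := -1) (κR := 0)
        (v := π/3) (gd := gdpi) (sg := Set.Iic (π/3)) (ψ0 := ψ0)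
        hgc hgpos hgd hcond (Or.inl rfl) (Or.inr rfl)
        (by linarith) (by linarith)
        (fun ψ h1 h2 => foldA ψ (by linarith) h2)
        (fun ψ h1 h2 => foldB ψ h1 (by linarith))
        (fun ψ h1 h2 => ⟨by linarith, by linarith⟩)
        (fun ψ h1 h2 => by simp only [Set.mem_Iic]; linarith)
        (fun ψ h1 h2 => by simp only [Set.mem_Iic]; linarith)
        (by ring) (by ring) hpi hg3 (by linarith) hA
      rw [show -(π/3) + π/3 = (0:ℝ) by ring] at hstep
      exact hstep
    · have hpiece := piece_convexOn (a := -(π/3)) (b := 0) (σ := -1) (κ := 0)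
        (ψ0 := ψ0) hgc hgpos hgd hcond (Or.inr rfl) foldB
        (fun ψ h1 h2 => ⟨by linarith, by linarith⟩)
      refine hpiece.subset ?_ (convex_arctan_preimage ψ0 _ Set.ordConnected_Iic)
      intro t ht
      simp only [Set.mem_setOf_eq, Set.mem_Icc] at ht ⊢
      exact ⟨by linarith [harcb1 t], ht⟩
  -- up to {ψ ≤ π/3}
  have hC : ConvexOn ℝ {t : ℝ | ψ0 + Real.arctan t ≤ π/3} (cfun g ψ0) := by
    have hstep := glue_step (ψk := 0) (σL := -1) (κL := 0) (σR := 1) (κR := 0)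
      (v := 0) (gd := gd0) (sg := Set.Ici 0) (ψ0 := ψ0)
      hgc hgpos hgd hcond (Or.inr rfl) (Or.inl rfl)
      (by linarith) (by linarith)
      (fun ψ h1 h2 => foldB ψ (by linarith) h2)
      (fun ψ h1 h2 => foldC ψ h1 (by linarith))
      (fun ψ h1 h2 => ⟨by linarith, by linarith⟩)
      (fun ψ h1 h2 => by simp only [Set.mem_Ici]; linarith)
      (fun ψ h1 h2 => by simp only [Set.mem_Ici]; linarith)
      (by ring) (by ring) h0 hg0 (by linarith) hB
    rw [show (0:ℝ) + π/3 = π/3 by ring] at hstep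
    exact hstep
  -- up to {ψ ≤ 2π/3}
  have hD : ConvexOn ℝ {t : ℝ | ψ0 + Real.arctan t ≤ 2*π/3} (cfun g ψ0) := by
    have hstep := glue_step (ψk := π/3) (σL := 1) (κL := 0) (σR := -1) (κR := 2*π/3)
      (v := π/3) (gd := gdpi) (sg := Set.Iic (π/3)) (ψ0 := ψ0)
      hgc hgpos hgd hcond (Or.inl rfl) (Or.inr rfl)
      (by linarith) (by linarith)
      (fun ψ h1 h2 => foldC ψ (by linarith) h2)
      (fun ψ h1 h2 => foldD ψ h1 (by linarith))
      (fun ψ h1 h2 => ⟨by linarith, by linarith⟩)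
      (fun ψ h1 h2 => by simp only [Set.mem_Iic]; linarith)
      (fun ψ h1 h2 => by simp only [Set.mem_Iic]; linarith)
      (by ring) (by ring) hpi hg3 (by linarith) hC
    rw [show π/3 + π/3 = 2*π/3 by ring] at hstep
    exact hstep
  rcases le_or_gt ψ0 (π/6) with hc | hc
  · have huniv : {t : ℝ | ψ0 + Real.arctan t ≤ 2*π/3} = Set.univ :=
      Set.eq_univ_of_forall (fun t => by
        simp only [Set.mem_setOf_eq]
        linarith [harcb2 t])
    rw [huniv] at hD
    exact hD
  · have hstep := glue_step (ψk := 2*π/3) (σL := -1) (κL := 2*π/3) (σR := 1) (κR := -(2*π/3))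
      (v := 0) (gd := gd0) (sg := Set.Ici 0) (ψ0 := ψ0)
      hgc hgpos hgd hcond (Or.inr rfl) (Or.inl rfl)
      (by linarith) (by linarith)
      (fun ψ h1 h2 => foldD ψ (by linarith) h2)
      (fun ψ h1 h2 => foldE ψ h1 (by linarith))
      (fun ψ h1 h2 => ⟨by linarith, by linarith⟩)
      (fun ψ h1 h2 => by simp only [Set.mem_Ici]; linarith)
      (fun ψ h1 h2 => by simp only [Set.mem_Ici]; linarith)
      (by ring) (by ring) h0 hg0 (by linarith) hD
    have huniv : {t : ℝ | ψ0 + Real.arctan t ≤ 2*π/3 + π/3} = Set.univ :=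
      Set.eq_univ_of_forall (fun t => by
        simp only [Set.mem_setOf_eq]
        linarith [harcb2 t])
    rw [huniv] at hstep
    exact hstep

/-! ### `cfun` is convex for all angles; `Gf` basics -/

lemma fold_int_period (ψ : ℝ) (k : ℤ) : fold (ψ + k * (2*π/3)) = fold ψ := by
  have hper : Function.Periodic fold (2*π/3) := fold_period
  exact (hper.int_mul k) ψ

lemma convexOn_comp_neg {f : ℝ → ℝ} (hf : ConvexOn ℝ Set.univ f) :
    ConvexOn ℝ Set.univ (fun t => f (-t)) := by
  refine ⟨convex_univ, ?_⟩
  intro x _ y _ a b ha hb hab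
  have h := hf.2 (Set.mem_univ (-x)) (Set.mem_univ (-y)) ha hb hab
  have e : a • (-x) + b • (-y) = -(a • x + b • y) := by
    simp only [smul_eq_mul]; ring
  rw [e] at h
  exact h

lemma sqrt_one_add_tan_sq {θ : ℝ} (h : 0 < Real.cos θ) :
    Real.sqrt (1 + Real.tan θ ^ 2) = 1 / Real.cos θ := by
  have h1 : 1 + Real.tan θ ^ 2 = (1 / Real.cos θ) ^ 2 := by
    rw [Real.tan_eq_sin_div_cos]
    field_simp
    exact Real.cos_sq_add_sin_sq θ
  rw [h1, Real.sqrt_sq (by positivity)]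

lemma cfun_convexOn_all {g : ℝ → ℝ} {gd0 gdpi : ℝ}
    (hgc : ContinuousOn g (Set.Icc 0 (π / 3)))
    (hgpos : ∀ t ∈ Set.Icc 0 (π / 3), 0 < g t)
    (hgd : ∀ t ∈ Set.Ioo 0 (π / 3),
      DifferentiableAt ℝ g t ∧ DifferentiableAt ℝ (deriv g) t)
    (h0 : HasDerivWithinAt g gd0 (Set.Ici 0) 0)
    (hpi : HasDerivWithinAt g gdpi (Set.Iic (π / 3)) (π / 3))
    (hcond : ∀ t ∈ Set.Ioo 0 (π / 3),
      0 ≤ g t ^ 2 + 2 * (deriv g t) ^ 2 - g t * deriv (deriv g) t)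
    (hgd0neg : gd0 ≤ 0) (hgdpipos : 0 ≤ gdpi)
    (ψ0 : ℝ) :
    ConvexOn ℝ Set.univ (cfun g ψ0) := by
  have hπ : (0:ℝ) < π := Real.pi_pos
  have h23 : (0:ℝ) < 2*π/3 := by positivity
  set k := ⌊ψ0 / (2*π/3)⌋ with hk
  set ψ' := ψ0 - k * (2*π/3) with hψ'
  have h1 : (k:ℝ) ≤ ψ0 / (2*π/3) := by rw [hk]; exact Int.floor_le _
  have h2 : ψ0 / (2*π/3) < (k:ℝ) + 1 := by rw [hk]; exact Int.lt_floor_add_one _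
  have hψ'0 : 0 ≤ ψ' := by
    have h1' : (k:ℝ) * (2*π/3) ≤ ψ0 := by
      rw [← le_div_iff₀ h23]; exact h1
    rw [hψ']; linarith
  have hψ'lt : ψ' < 2*π/3 := by
    have h2' : ψ0 < ((k:ℝ) + 1) * (2*π/3) := by
      rw [← div_lt_iff₀ h23]; exact h2
    rw [hψ']; nlinarith
  have hcf : cfun g ψ0 = cfun g ψ' := by
    funext t
    unfold cfun
    rw [show ψ0 + Real.arctan t = (ψ' + Real.arctan t) + k * (2*π/3) by rw [hψ']; ring,
      fold_int_period]
  rcases le_or_gt ψ' (π/3) with hle | hgt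
  · rw [hcf]
    exact cfun_convexOn_base hgc hgpos hgd h0 hpi hcond hgd0neg hgdpipos hψ'0 hle
  · have hψ'' : cfun g ψ' = fun t => cfun g (2*π/3 - ψ') (-t) := by
      funext t
      unfold cfun
      rw [Real.arctan_neg, neg_sq]
      have e1 : 2*π/3 - ψ' + -Real.arctan t = -(ψ' + Real.arctan t) + 1 * (2*π/3) := by ring
      rw [e1, show (-(ψ' + Real.arctan t) + 1 * (2*π/3)) = -(ψ' + Real.arctan t) + (1:ℤ) * (2*π/3) by push_cast; ring,
        fold_int_period, fold_neg]
    rw [hcf, hψ'']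
    exact convexOn_comp_neg
      (cfun_convexOn_base hgc hgpos hgd h0 hpi hcond hgd0neg hgdpipos
        (by linarith) (by linarith))

lemma Gf_zero (g : ℝ → ℝ) : Gf g 0 = 0 := by
  have h : qf 0 = 0 := by simp [qf]
  rw [Gf, h, zero_div]

lemma Gf_nonneg (g : ℝ → ℝ) (hgpos : ∀ t ∈ Set.Icc 0 (π / 3), 0 < g t) (S : ℝ × ℝ) :
    0 ≤ Gf g S := by
  rcases eq_or_ne S 0 with h | h
  · rw [h, Gf_zero]
  · obtain ⟨r, hr, ψ, rfl⟩ := exists_ptv h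
    rw [Gf_ptv g hr.le]
    exact div_nonneg hr.le (hgpos _ (fold_mem ψ)).le

lemma Gf_line (g : ℝ → ℝ) {d : ℝ} (hd : 0 ≤ d) (ψ0 t : ℝ) :
    Gf g (ptv d ψ0 + t • (d • dirv ψ0)) = d * cfun g ψ0 t := by
  rw [← ptv_line]
  have h1 : (0:ℝ) ≤ d * Real.sqrt (1 + t ^ 2) := by positivity
  rw [Gf_ptv g h1]
  unfold cfun
  rw [mul_div_assoc]

/-- one-sided derivatives of a convex function are ordered -/
lemma oneSided_le {f : ℝ → ℝ} {la ra b : ℝ} (hf : ConvexOn ℝ Set.univ f)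
    (hL : HasDerivWithinAt f la (Set.Iic b) b) (hR : HasDerivWithinAt f ra (Set.Ici b) b) :
    la ≤ ra := by
  have h1 : ∀ v, b < v → la ≤ (f v - f b) / (v - b) := by
    intro v hv
    rw [hasDerivWithinAt_iff_tendsto_slope, Set.Iic_diff_right] at hL
    refine le_of_tendsto hL ?_
    filter_upwards [eventually_mem_nhdsWithin] with u hu
    have hu' : u < b := hu
    have hadj := hf.slope_mono_adjacent (Set.mem_univ u) (Set.mem_univ v) hu' hv
    show slope f b u ≤ _
    rw [slope_comm, slope_def_field]
    have := (slope_combo hu' hv hadj).1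
    calc (f b - f u) / (b - u) ≤ (f v - f u) / (v - u) := this
    _ ≤ (f v - f b) / (v - b) := (slope_combo hu' hv hadj).2
  rw [hasDerivWithinAt_iff_tendsto_slope, Set.Ici_sdiff_left] at hR
  refine ge_of_tendsto hR ?_
  filter_upwards [eventually_mem_nhdsWithin] with v hv
  show la ≤ slope f b v
  rw [slope_def_field]
  exact h1 v hv

/-! ### Convexity of Gf from the conditions -/

lemma Gf_convexOn {g : ℝ → ℝ} {gd0 gdpi : ℝ}
    (hgc : ContinuousOn g (Set.Icc 0 (π / 3)))
    (hgpos : ∀ t ∈ Set.Icc 0 (π / 3), 0 < g t)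
    (hgd : ∀ t ∈ Set.Ioo 0 (π / 3),
      DifferentiableAt ℝ g t ∧ DifferentiableAt ℝ (deriv g) t)
    (h0 : HasDerivWithinAt g gd0 (Set.Ici 0) 0)
    (hpi : HasDerivWithinAt g gdpi (Set.Iic (π / 3)) (π / 3))
    (hcond : ∀ t ∈ Set.Ioo 0 (π / 3),
      0 ≤ g t ^ 2 + 2 * (deriv g t) ^ 2 - g t * deriv (deriv g) t)
    (hgd0neg : gd0 ≤ 0) (hgdpipos : 0 ≤ gdpi) :
    ConvexOn ℝ Set.univ (Gf g) := by
  have hπ : (0:ℝ) < π := Real.pi_pos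
  have hcore := cfun_convexOn_all hgc hgpos hgd h0 hpi hcond hgd0neg hgdpipos
  have hGpos : ∀ ψ : ℝ, 0 < g (fold ψ) := fun ψ => hgpos _ (fold_mem ψ)
  have key : ∀ r1 r2 ψ1 ψ2 a b : ℝ, 0 < r1 → 0 < r2 → 0 ≤ a → 0 ≤ b → a + b = 1 →
      0 < ψ2 - ψ1 → ψ2 - ψ1 < π →
      Gf g (a • ptv r1 ψ1 + b • ptv r2 ψ2)
        ≤ a * Gf g (ptv r1 ψ1) + b * Gf g (ptv r2 ψ2) := by
    intro r1 r2 ψ1 ψ2 a b hr1 hr2 ha hb hab hδ1 hδ2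
    set w : ℝ → ℝ := fun ψc => r1 * Real.cos (ψ1 - ψc) - r2 * Real.cos (ψ2 - ψc) with hw
    have hlo : ψ2 - π/2 < ψ1 + π/2 := by linarith
    have hwlo : 0 < w (ψ2 - π/2) := by
      simp only [hw]
      rw [show ψ2 - (ψ2 - π/2) = π/2 by ring, Real.cos_pi_div_two]
      have hc : 0 < Real.cos (ψ1 - (ψ2 - π/2)) := by
        apply Real.cos_pos_of_mem_Ioo
        rw [Set.mem_Ioo]
        constructor <;> linarith
      nlinarith
    have hwhi : w (ψ1 + π/2) < 0 := by
      simp only [hw]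
      rw [show ψ1 - (ψ1 + π/2) = -(π/2) by ring, Real.cos_neg, Real.cos_pi_div_two]
      have hc : 0 < Real.cos (ψ2 - (ψ1 + π/2)) := by
        apply Real.cos_pos_of_mem_Ioo
        rw [Set.mem_Ioo]
        constructor <;> linarith
      nlinarith
    have hwc : ContinuousOn w (Set.Icc (ψ2 - π/2) (ψ1 + π/2)) := by
      apply Continuous.continuousOn
      apply Continuous.sub
      · exact continuous_const.mul (Real.continuous_cos.comp (continuous_const.sub continuous_id))
      · exact continuous_const.mul (Real.continuous_cos.comp (continuous_const.sub continuous_id))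
    obtain ⟨ψc, hψcmem, hψc0⟩ :=
      intermediate_value_Icc' hlo.le hwc ⟨hwhi.le, hwlo.le⟩
    have hψclo : ψ2 - π/2 < ψc := by
      rcases lt_or_eq_of_le hψcmem.1 with h | h
      · exact h
      · exfalso; rw [← h] at hψc0; rw [hψc0] at hwlo; exact lt_irrefl 0 hwlo
    have hψchi : ψc < ψ1 + π/2 := by
      rcases lt_or_eq_of_le hψcmem.2 with h | h
      · exact h
      · exfalso; rw [h] at hψc0; rw [hψc0] at hwhi; exact lt_irrefl 0 hwhi
    have hb1 : -(π/2) < ψ1 - ψc := by linarith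
    have hb2 : ψ1 - ψc < π/2 := by linarith
    have hb3 : -(π/2) < ψ2 - ψc := by linarith
    have hb4 : ψ2 - ψc < π/2 := by linarith
    have hcos1 : 0 < Real.cos (ψ1 - ψc) := Real.cos_pos_of_mem_Ioo ⟨hb1, hb2⟩
    have hcos2 : 0 < Real.cos (ψ2 - ψc) := Real.cos_pos_of_mem_Ioo ⟨hb3, hb4⟩
    set d := r1 * Real.cos (ψ1 - ψc) with hddef
    have hd : 0 < d := by positivity
    have hd2 : d = r2 * Real.cos (ψ2 - ψc) := by
      have : w ψc = 0 := hψc0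
      simp only [hw] at this
      rw [hddef]; linarith
    set t1 := Real.tan (ψ1 - ψc) with ht1def
    set t2 := Real.tan (ψ2 - ψc) with ht2def
    have hrad1 : d * Real.sqrt (1 + t1 ^ 2) = r1 := by
      rw [ht1def, sqrt_one_add_tan_sq hcos1, hddef]
      field_simp
    have hrad2 : d * Real.sqrt (1 + t2 ^ 2) = r2 := by
      rw [ht2def, sqrt_one_add_tan_sq hcos2, hd2]
      field_simp
    have hang1 : ψc + Real.arctan t1 = ψ1 := by
      rw [ht1def, Real.arctan_tan hb1 hb2]; ring
    have hang2 : ψc + Real.arctan t2 = ψ2 := by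
      rw [ht2def, Real.arctan_tan hb3 hb4]; ring
    have hx : ptv d ψc + t1 • (d • dirv ψc) = ptv r1 ψ1 := by
      rw [← ptv_line d ψc t1, hrad1, hang1]
    have hy : ptv d ψc + t2 • (d • dirv ψc) = ptv r2 ψ2 := by
      rw [← ptv_line d ψc t2, hrad2, hang2]
    have hz : a • ptv r1 ψ1 + b • ptv r2 ψ2
        = ptv d ψc + (a * t1 + b * t2) • (d • dirv ψc) := by
      rw [← hx, ← hy]
      have hP : ptv d ψc = (a + b) • ptv d ψc := by rw [hab, one_smul]
      conv_rhs => rw [hP]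
      module
    rw [hz, Gf_line g hd.le, ← hx, ← hy, Gf_line g hd.le, Gf_line g hd.le]
    have hineq := (hcore ψc).2 (Set.mem_univ t1) (Set.mem_univ t2) ha hb hab
    simp only [smul_eq_mul] at hineq
    calc d * cfun g ψc (a * t1 + b * t2)
        ≤ d * (a * cfun g ψc t1 + b * cfun g ψc t2) :=
          mul_le_mul_of_nonneg_left hineq hd.le
    _ = a * (d * cfun g ψc t1) + b * (d * cfun g ψc t2) := by ring
  refine ⟨convex_univ, ?_⟩
  intro x _ y _ a b ha hb hab
  simp only [smul_eq_mul]
  rcases eq_or_ne x 0 with rfl | hx0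
  · rw [smul_zero, zero_add, Gf_zero, mul_zero, zero_add]
    rcases eq_or_ne y 0 with rfl | hy0
    · rw [smul_zero, Gf_zero, mul_zero]
    · obtain ⟨r, hr, ψ, rfl⟩ := exists_ptv hy0
      rw [ptv_smul, Gf_ptv g (by positivity), Gf_ptv g hr.le]
      rw [mul_div_assoc]
  · rcases eq_or_ne y 0 with rfl | hy0
    · rw [smul_zero, add_zero, Gf_zero, mul_zero, add_zero]
      obtain ⟨r, hr, ψ, rfl⟩ := exists_ptv hx0
      rw [ptv_smul, Gf_ptv g (by positivity), Gf_ptv g hr.le]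
      rw [mul_div_assoc]
    · obtain ⟨r1, hr1, ψ1, rfl⟩ := exists_ptv hx0
      obtain ⟨r2, hr2, ψ2', rfl⟩ := exists_ptv hy0
      set m := ⌊(ψ2' - ψ1 + π) / (2*π)⌋ with hm
      set ψ2 := ψ2' - m * (2*π) with hψ2
      have h2π : (0:ℝ) < 2*π := by positivity
      have hfl1 : (m:ℝ) ≤ (ψ2' - ψ1 + π) / (2*π) := by rw [hm]; exact Int.floor_le _
      have hfl2 : (ψ2' - ψ1 + π) / (2*π) < (m:ℝ) + 1 := by rw [hm]; exact Int.lt_floor_add_one _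
      have hfl1' : (m:ℝ) * (2*π) ≤ ψ2' - ψ1 + π := by
        rw [← le_div_iff₀ h2π]; exact hfl1
      have hfl2' : ψ2' - ψ1 + π < ((m:ℝ) + 1) * (2*π) := by
        rw [← div_lt_iff₀ h2π]; exact hfl2
      have hδlow : -π ≤ ψ2 - ψ1 := by rw [hψ2]; linarith
      have hδhigh : ψ2 - ψ1 < π := by rw [hψ2]; nlinarith
      have hy2 : ptv r2 ψ2' = ptv r2 ψ2 := by
        rw [show ψ2' = ψ2 + (m:ℝ) * (2*π) by rw [hψ2]; ring]
        exact ptv_two_pi r2 ψ2 m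
      rw [hy2]
      rcases lt_trichotomy (ψ2 - ψ1) 0 with hneg | hzero | hpos
      · rcases eq_or_lt_of_le hδlow with hpi' | hgtpi
        · -- opposite rays : ψ2 = ψ1 - π
          have hψ2v : ψ2 = ψ1 - π := by linarith
          have hyr : ptv r2 ψ2 = ptv (-r2) ψ1 := by
            have h := ptv_add_pi (-r2) (ψ1 - π)
            rw [show ψ1 - π + π = ψ1 by ring, neg_neg] at h
            rw [hψ2v, ← h]
          set s := a * r1 + b * -r2 with hs
          have hzz : a • ptv r1 ψ1 + b • ptv r2 ψ2 = ptv s ψ1 := by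
            rw [hyr, ptv_smul, ptv_smul, ptv_add_radii]
          rw [hzz, Gf_ptv g hr1.le, Gf_ptv g hr2.le]
          have hG1 := hGpos ψ1
          have hG2 := hGpos ψ2
          rcases le_or_gt 0 s with hspos | hsneg
          · rw [Gf_ptv g hspos]
            have hs_le : s ≤ a * r1 := by
              rw [hs]; nlinarith [mul_nonneg hb hr2.le]
            have h1 : s / g (fold ψ1) ≤ (a * r1) / g (fold ψ1) :=
              (div_le_div_iff_of_pos_right hG1).mpr hs_le
            have h2 : 0 ≤ b * (r2 / g (fold ψ2)) := by positivity
            have h3 : (a * r1) / g (fold ψ1) = a * (r1 / g (fold ψ1)) := by ring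
            linarith
          · have hfold12 : fold (ψ1 + π) = fold ψ2 := by
              have h := fold_int_period (ψ1 - π) 3
              rw [show ψ1 - π + ((3:ℤ):ℝ) * (2*π/3) = ψ1 + π by push_cast; ring] at h
              rw [hψ2v]; exact h
            have hneg : ptv s ψ1 = ptv (-s) (ψ1 + π) := by
              have h := ptv_add_pi (-s) ψ1
              rw [neg_neg] at h
              exact h.symm
            rw [hneg, Gf_ptv g (by linarith : (0:ℝ) ≤ -s), hfold12]
            have h1 : -s ≤ b * r2 := by
              rw [hs]; nlinarith [mul_nonneg ha hr1.le]
            have h2 : (-s) / g (fold ψ2) ≤ (b * r2) / g (fold ψ2) :=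
              (div_le_div_iff_of_pos_right hG2).mpr h1
            have h3 : 0 ≤ a * (r1 / g (fold ψ1)) := by positivity
            have h4 : (b * r2) / g (fold ψ2) = b * (r2 / g (fold ψ2)) := by ring
            linarith
        · -- -π < δ < 0 : swap roles
          have h := key r2 r1 ψ2 ψ1 b a hr2 hr1 hb ha (by linarith) (by linarith) (by linarith)
          rw [add_comm (b • ptv r2 ψ2) (a • ptv r1 ψ1)] at h
          linarith
      · -- same ray
        have hψeq : ψ2 = ψ1 := by linarith
        rw [hψeq, ptv_smul, ptv_smul, ptv_add_radii,
          Gf_ptv g (by positivity), Gf_ptv g hr1.le, Gf_ptv g hr2.le]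
        have : a * (r1 / g (fold ψ1)) + b * (r2 / g (fold ψ1))
            = (a * r1 + b * r2) / g (fold ψ1) := by ring
        rw [this]
      · exact key r1 r2 ψ1 ψ2 a b hr1 hr2 ha hb hab hpos hδhigh

/-! ### Necessity of the conditions -/

lemma cfun_convex_of_Gf {g : ℝ → ℝ} (hG : ConvexOn ℝ Set.univ (Gf g)) (ψ0 : ℝ) :
    ConvexOn ℝ Set.univ (cfun g ψ0) := by
  have hA := hG.comp_affineMap (AffineMap.lineMap (ptv 1 ψ0) (ptv 1 ψ0 + dirv ψ0))
  rw [Set.preimage_univ] at hA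
  have heq : (Gf g ∘ (AffineMap.lineMap (ptv 1 ψ0) (ptv 1 ψ0 + dirv ψ0))) = cfun g ψ0 := by
    funext t
    show Gf g (AffineMap.lineMap (ptv 1 ψ0) (ptv 1 ψ0 + dirv ψ0) t) = _
    rw [AffineMap.lineMap_apply_module]
    have e : (1 - t) • ptv 1 ψ0 + t • (ptv 1 ψ0 + dirv ψ0)
        = ptv 1 ψ0 + t • ((1:ℝ) • dirv ψ0) := by module
    rw [e, Gf_line g (by norm_num : (0:ℝ) ≤ 1) ψ0 t, one_mul]
  rw [heq] at hA
  exact hA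

lemma cond_interior {g : ℝ → ℝ}
    (hgpos : ∀ t ∈ Set.Icc 0 (π / 3), 0 < g t)
    (hgd : ∀ t ∈ Set.Ioo 0 (π / 3),
      DifferentiableAt ℝ g t ∧ DifferentiableAt ℝ (deriv g) t)
    (hG : ConvexOn ℝ Set.univ (Gf g)) :
    ∀ θ0 ∈ Set.Ioo 0 (π / 3),
      0 ≤ g θ0 ^ 2 + 2 * (deriv g θ0) ^ 2 - g θ0 * deriv (deriv g) θ0 := by
  intro θ0 hθ0
  have hconv := cfun_convex_of_Gf hG θ0
  set U := {t : ℝ | θ0 + Real.arctan t ∈ Set.Ioo 0 (π/3)} with hU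
  have hUopen : IsOpen U := isOpen_Ioo.preimage (continuous_const.add Real.continuous_arctan)
  have h0U : (0:ℝ) ∈ U := by
    show θ0 + Real.arctan 0 ∈ Set.Ioo 0 (π/3)
    rw [Real.arctan_zero, add_zero]
    exact hθ0
  have hpt : ∀ t : ℝ, (1:ℝ) * (θ0 + Real.arctan t) + 0 = θ0 + Real.arctan t := fun t => by ring
  have hkey : ∀ t ∈ U, HasDerivAt (cfun g θ0) (c1fun g 1 θ0 0 t) t := by
    intro t ht
    have hgdA : DifferentiableAt ℝ g ((1:ℝ) * (θ0 + Real.arctan t) + 0) := by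
      rw [hpt]; exact (hgd _ ht).1
    have hne : g ((1:ℝ) * (θ0 + Real.arctan t) + 0) ≠ 0 := by
      rw [hpt]
      exact (hgpos _ ⟨ht.1.le, ht.2.le⟩).ne'
    have hEq : cfun g θ0 =ᶠ[nhds t] mfun g 1 θ0 0 := by
      filter_upwards [hUopen.mem_nhds ht] with u hu
      unfold cfun mfun
      rw [foldC _ hu.1.le hu.2.le]
    exact (hasDerivAt_mfun hgdA hne).congr_of_eventuallyEq hEq
  -- monotonicity of c1fun near 0
  have hmono : ∀ u ∈ U, 0 < u → c1fun g 1 θ0 0 0 ≤ c1fun g 1 θ0 0 u := by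
    intro u hu hupos
    have h1 : c1fun g 1 θ0 0 0 ≤ (cfun g θ0 u - cfun g θ0 0) / (u - 0) :=
      deriv_le_slope hconv (Set.mem_univ 0) (Set.mem_univ u) hupos
        ((hkey 0 h0U).hasDerivWithinAt)
    have h2 : (cfun g θ0 u - cfun g θ0 0) / (u - 0) ≤ c1fun g 1 θ0 0 u :=
      slope_le_deriv hconv (Set.mem_univ 0) (Set.mem_univ u) hupos
        ((hkey u hu).hasDerivWithinAt)
    linarith
  -- second derivative at 0
  have hgdA0 : DifferentiableAt ℝ g ((1:ℝ) * (θ0 + Real.arctan 0) + 0) := by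
    rw [hpt, Real.arctan_zero, add_zero]; exact (hgd _ hθ0).1
  have hgd2A0 : DifferentiableAt ℝ (deriv g) ((1:ℝ) * (θ0 + Real.arctan 0) + 0) := by
    rw [hpt, Real.arctan_zero, add_zero]; exact (hgd _ hθ0).2
  have hne0 : g ((1:ℝ) * (θ0 + Real.arctan 0) + 0) ≠ 0 := by
    rw [hpt, Real.arctan_zero, add_zero]
    exact (hgpos _ ⟨hθ0.1.le, hθ0.2.le⟩).ne'
  have hder2 := hasDerivAt_c1fun (σ := 1) (ψ0 := θ0) (κ := 0) (t := 0)
    (Or.inl rfl) hgdA0 hgd2A0 hne0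
  set E0 := (g ((1:ℝ) * (θ0 + Real.arctan 0) + 0) ^ 2
      + 2 * (deriv g ((1:ℝ) * (θ0 + Real.arctan 0) + 0)) ^ 2
      - g ((1:ℝ) * (θ0 + Real.arctan 0) + 0)
        * deriv (deriv g) ((1:ℝ) * (θ0 + Real.arctan 0) + 0)) /
      ((g ((1:ℝ) * (θ0 + Real.arctan 0) + 0)) ^ 3
        * ((1 + (0:ℝ) ^ 2) * Real.sqrt (1 + (0:ℝ) ^ 2))) with hE0
  have hE0nonneg : 0 ≤ E0 := by
    rw [hasDerivAt_iff_tendsto_slope] at hder2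
    have hsub : Set.Ioi (0:ℝ) ⊆ {(0:ℝ)}ᶜ := fun x hx => by
      simp only [Set.mem_compl_iff, Set.mem_singleton_iff]
      intro h
      rw [h] at hx
      exact lt_irrefl 0 (Set.mem_Ioi.mp hx)
    have hder2' := hder2.mono_left (nhdsWithin_mono 0 hsub)
    refine ge_of_tendsto hder2' ?_
    have hev : ∀ᶠ u in nhdsWithin (0:ℝ) (Set.Ioi 0), u ∈ U :=
      Filter.eventually_of_mem (nhdsWithin_le_nhds (hUopen.mem_nhds h0U)) (fun _ h => h)
    filter_upwards [hev, eventually_mem_nhdsWithin] with u huU hupos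
    show 0 ≤ slope (c1fun g 1 θ0 0) 0 u
    rw [slope_def_field]
    apply div_nonneg
    · have := hmono u huU hupos
      linarith
    · simp only [sub_zero]; exact (le_of_lt hupos)
  -- translate
  have harc : (1:ℝ) * (θ0 + Real.arctan 0) + 0 = θ0 := by
    rw [Real.arctan_zero]; ring
  rw [harc] at hE0
  have hgθpos : 0 < g θ0 := hgpos _ ⟨hθ0.1.le, hθ0.2.le⟩
  have hDpos : 0 < (g θ0) ^ 3 * ((1 + (0:ℝ) ^ 2) * Real.sqrt (1 + (0:ℝ) ^ 2)) := by
    have := sqrt_one_add_sq_pos 0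
    positivity
  have := mul_nonneg hE0nonneg hDpos.le
  rw [hE0, div_mul_cancel₀ _ hDpos.ne'] at this
  exact this

lemma cond_corner0 {g : ℝ → ℝ} {gd0 : ℝ}
    (hgpos : ∀ t ∈ Set.Icc 0 (π / 3), 0 < g t)
    (h0 : HasDerivWithinAt g gd0 (Set.Ici 0) 0)
    (hG : ConvexOn ℝ Set.univ (Gf g)) : gd0 ≤ 0 := by
  have hπ : (0:ℝ) < π := Real.pi_pos
  have hconv := cfun_convex_of_Gf hG 0
  have hg0 : 0 < g 0 := hgpos _ ⟨le_refl _, by positivity⟩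
  set a := Real.tan (-(π/6)) with hadef
  have harca : Real.arctan a = -(π/6) := Real.arctan_tan (by linarith) (by linarith)
  have ha0 : a < 0 := by
    rw [← Real.arctan_strictMono.lt_iff_lt, harca, Real.arctan_zero]; linarith
  set c := Real.tan (π/6) with hcdef
  have harcc : Real.arctan c = π/6 := Real.arctan_tan (by linarith) (by linarith)
  have hc0 : 0 < c := by
    rw [← Real.arctan_strictMono.lt_iff_lt, harcc, Real.arctan_zero]; linarith
  have hv : (-1:ℝ) * ((0:ℝ) + Real.arctan 0) + 0 = 0 := by rw [Real.arctan_zero]; ring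
  have hvR : (1:ℝ) * ((0:ℝ) + Real.arctan 0) + 0 = 0 := by rw [Real.arctan_zero]; ring
  have hL0 := hasDerivWithinAt_cfun (g := g) (σ := -1) (ψ0 := 0) (κ := 0) (x := 0)
    (gd := gd0) (st := Set.Icc a 0) (sg := Set.Ici 0)
    (fun t ht => by
      have h1 : Real.arctan a ≤ Real.arctan t := Real.arctan_strictMono.monotone ht.1
      have h2 : Real.arctan t ≤ Real.arctan 0 := Real.arctan_strictMono.monotone ht.2
      rw [harca] at h1; rw [Real.arctan_zero] at h2
      rw [zero_add]
      exact foldB _ (by linarith) (by linarith))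
    (by rw [zero_add, Real.arctan_zero]
        exact foldB _ (by linarith) (by linarith))
    (fun t ht => by
      have h2 : Real.arctan t ≤ Real.arctan 0 := Real.arctan_strictMono.monotone ht.2
      rw [Real.arctan_zero] at h2
      simp only [Set.mem_Ici]
      nlinarith)
    (by rw [hv]; exact h0)
    (by rw [hv]; exact hg0.ne')
  rw [hv] at hL0
  have hL : HasDerivWithinAt (cfun g 0)
      ((0 * g 0 - (-1) * gd0) / ((g 0) ^ 2 * Real.sqrt (1 + (0:ℝ) ^ 2))) (Set.Iic 0) 0 :=
    hL0.mono_of_mem_nhdsWithin (by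
      rw [← nhdsWithin_Icc_eq_nhdsLE ha0]
      exact self_mem_nhdsWithin)
  have hR0 := hasDerivWithinAt_cfun (g := g) (σ := 1) (ψ0 := 0) (κ := 0) (x := 0)
    (gd := gd0) (st := Set.Icc 0 c) (sg := Set.Ici 0)
    (fun t ht => by
      have h1 : Real.arctan 0 ≤ Real.arctan t := Real.arctan_strictMono.monotone ht.1
      have h2 : Real.arctan t ≤ Real.arctan c := Real.arctan_strictMono.monotone ht.2
      rw [Real.arctan_zero] at h1; rw [harcc] at h2
      rw [zero_add]
      exact foldC _ (by linarith) (by linarith))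
    (by rw [zero_add, Real.arctan_zero]
        exact foldC _ (by linarith) (by linarith))
    (fun t ht => by
      have h1 : Real.arctan 0 ≤ Real.arctan t := Real.arctan_strictMono.monotone ht.1
      rw [Real.arctan_zero] at h1
      simp only [Set.mem_Ici]
      nlinarith)
    (by rw [hvR]; exact h0)
    (by rw [hvR]; exact hg0.ne')
  rw [hvR] at hR0
  have hR : HasDerivWithinAt (cfun g 0)
      ((0 * g 0 - 1 * gd0) / ((g 0) ^ 2 * Real.sqrt (1 + (0:ℝ) ^ 2))) (Set.Ici 0) 0 :=
    hR0.mono_of_mem_nhdsWithin (by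
      rw [← nhdsWithin_Icc_eq_nhdsGE hc0]
      exact self_mem_nhdsWithin)
  have hle := oneSided_le hconv hL hR
  have hD : 0 < (g 0) ^ 2 * Real.sqrt (1 + (0:ℝ) ^ 2) := by
    have := sqrt_one_add_sq_pos 0
    positivity
  have := (div_le_div_iff_of_pos_right hD).mp hle
  linarith

lemma cond_cornerpi {g : ℝ → ℝ} {gdpi : ℝ}
    (hgpos : ∀ t ∈ Set.Icc 0 (π / 3), 0 < g t)
    (hpi : HasDerivWithinAt g gdpi (Set.Iic (π / 3)) (π / 3))
    (hG : ConvexOn ℝ Set.univ (Gf g)) : 0 ≤ gdpi := by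
  have hπ : (0:ℝ) < π := Real.pi_pos
  have hconv := cfun_convex_of_Gf hG (π/3)
  have hg3 : 0 < g (π/3) := hgpos _ ⟨by positivity, le_refl _⟩
  set a := Real.tan (-(π/6)) with hadef
  have harca : Real.arctan a = -(π/6) := Real.arctan_tan (by linarith) (by linarith)
  have ha0 : a < 0 := by
    rw [← Real.arctan_strictMono.lt_iff_lt, harca, Real.arctan_zero]; linarith
  set c := Real.tan (π/6) with hcdef
  have harcc : Real.arctan c = π/6 := Real.arctan_tan (by linarith) (by linarith)
  have hc0 : 0 < c := by
    rw [← Real.arctan_strictMono.lt_iff_lt, harcc, Real.arctan_zero]; linarith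
  have hv : (1:ℝ) * (π/3 + Real.arctan 0) + 0 = π/3 := by rw [Real.arctan_zero]; ring
  have hvR : (-1:ℝ) * (π/3 + Real.arctan 0) + 2*π/3 = π/3 := by rw [Real.arctan_zero]; ring
  have hL0 := hasDerivWithinAt_cfun (g := g) (σ := 1) (ψ0 := π/3) (κ := 0) (x := 0)
    (gd := gdpi) (st := Set.Icc a 0) (sg := Set.Iic (π/3))
    (fun t ht => by
      have h1 : Real.arctan a ≤ Real.arctan t := Real.arctan_strictMono.monotone ht.1
      have h2 : Real.arctan t ≤ Real.arctan 0 := Real.arctan_strictMono.monotone ht.2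
      rw [harca] at h1; rw [Real.arctan_zero] at h2
      exact foldC _ (by linarith) (by linarith))
    (by rw [Real.arctan_zero]
        exact foldC _ (by linarith) (by linarith))
    (fun t ht => by
      have h2 : Real.arctan t ≤ Real.arctan 0 := Real.arctan_strictMono.monotone ht.2
      rw [Real.arctan_zero] at h2
      simp only [Set.mem_Iic]
      nlinarith)
    (by rw [hv]; exact hpi)
    (by rw [hv]; exact hg3.ne')
  rw [hv] at hL0
  have hL : HasDerivWithinAt (cfun g (π/3))
      ((0 * g (π/3) - 1 * gdpi) / ((g (π/3)) ^ 2 * Real.sqrt (1 + (0:ℝ) ^ 2)))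
      (Set.Iic 0) 0 :=
    hL0.mono_of_mem_nhdsWithin (by
      rw [← nhdsWithin_Icc_eq_nhdsLE ha0]
      exact self_mem_nhdsWithin)
  have hR0 := hasDerivWithinAt_cfun (g := g) (σ := -1) (ψ0 := π/3) (κ := 2*π/3) (x := 0)
    (gd := gdpi) (st := Set.Icc 0 c) (sg := Set.Iic (π/3))
    (fun t ht => by
      have h1 : Real.arctan 0 ≤ Real.arctan t := Real.arctan_strictMono.monotone ht.1
      have h2 : Real.arctan t ≤ Real.arctan c := Real.arctan_strictMono.monotone ht.2
      rw [Real.arctan_zero] at h1; rw [harcc] at h2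
      exact foldD _ (by linarith) (by linarith))
    (by rw [Real.arctan_zero]
        exact foldD _ (by linarith) (by linarith))
    (fun t ht => by
      have h1 : Real.arctan 0 ≤ Real.arctan t := Real.arctan_strictMono.monotone ht.1
      rw [Real.arctan_zero] at h1
      simp only [Set.mem_Iic]
      nlinarith)
    (by rw [hvR]; exact hpi)
    (by rw [hvR]; exact hg3.ne')
  rw [hvR] at hR0
  have hR : HasDerivWithinAt (cfun g (π/3))
      ((0 * g (π/3) - (-1) * gdpi) / ((g (π/3)) ^ 2 * Real.sqrt (1 + (0:ℝ) ^ 2)))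
      (Set.Ici 0) 0 :=
    hR0.mono_of_mem_nhdsWithin (by
      rw [← nhdsWithin_Icc_eq_nhdsGE hc0]
      exact self_mem_nhdsWithin)
  have hle := oneSided_le hconv hL hR
  have hD : 0 < (g (π/3)) ^ 2 * Real.sqrt (1 + (0:ℝ) ^ 2) := by
    have := sqrt_one_add_sq_pos 0
    positivity
  have := (div_le_div_iff_of_pos_right hD).mp hle
  linarith

/-- Theorem 2: For g continuous, strictly positive on [0,π/3], twice
differentiable on (0,π/3), with one-sided derivatives g′₊(0), g′₋(π/3) at the endpoints,
G = q/g(θ) is convex on ℝ² iff g² + 2g′² − gg″ ≥ 0 on (0,π/3), g′₊(0) ≤ 0 and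
g′₋(π/3) ≥ 0. -/
theorem convexity_nonsmooth_deviatoric
    (g : ℝ → ℝ)
    (hgc : ContinuousOn g (Set.Icc 0 (Real.pi / 3)))
    (hgpos : ∀ t ∈ Set.Icc 0 (Real.pi / 3), 0 < g t)
    (hgd : ∀ t ∈ Set.Ioo 0 (Real.pi / 3),
      DifferentiableAt ℝ g t ∧ DifferentiableAt ℝ (deriv g) t)
    (gd0 gdpi : ℝ)
    (h0 : HasDerivWithinAt g gd0 (Set.Ici 0) 0)
    (hpi : HasDerivWithinAt g gdpi (Set.Iic (Real.pi / 3)) (Real.pi / 3)) :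
    ConvexOn ℝ Set.univ (Gf g) ↔
      ((∀ t ∈ Set.Ioo 0 (Real.pi / 3),
          0 ≤ (g t) ^ 2 + 2 * (deriv g t) ^ 2 - g t * deriv (deriv g) t) ∧
        gd0 ≤ 0 ∧ 0 ≤ gdpi) := by
  constructor
  · intro hG
    exact ⟨cond_interior hgpos hgd hG, cond_corner0 hgpos h0 hG, cond_cornerpi hgpos hpi hG⟩
  · rintro ⟨h1, h2, h3⟩
    exact Gf_convexOn hgc hgpos hgd h0 hpi h1 h2 h3
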